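/- There exists a finite-horizon MDP (with H = 2), a function class F = {Q*, f} containing Q*, a weight class W = {w*, w_bad} containing w*, and a data distribution d^D covering π*, such that both f and Q* have zero population average Bellman error E_{d^D_h}[w_h·(g_h − T_h g_{h+1})] for every w ∈ W and h, both achieve f_0(x_0, π_f(x_0)) = Q*_0(x_0, π*(x_0)) = 1, yet the greedy policy π_f is not ε-optimal for any ε < 1. -/
import Mathlib

open Finset

def nxt : ℕ → Fin 6 → Fin 3 → Fin 6
  | 0, x, a => if x = 0 then (if a = 0 then 1 else 2) else x
  | _ + 1, x, a => if x = 1 then (if a = 0 then 3 else 4) else if x = 2 then 4 else x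

noncomputable def Pd (h : ℕ) (x : Fin 6) (a : Fin 3) (x' : Fin 6) : ℝ :=
  if x' = nxt h x a then 1 else 0

noncomputable def Rd : ℕ → Fin 6 → Fin 3 → ℝ
  | 1, x, a => if x = 1 ∧ a = 0 then 1 else 0
  | _, _, _ => 0

noncomputable def Qd : ℕ → Fin 6 → Fin 3 → ℝ
  | 0, x, a => if x = 0 ∧ a = 0 ∨ x = 1 then 1 else 0
  | 1, x, a => if x = 1 ∧ a = 0 then 1 else 0
  | _ + 2, _, _ => 0

noncomputable def fd : ℕ → Fin 6 → Fin 3 → ℝ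
  | 0, x, a => if x = 0 ∧ (a = 0 ∨ a = 1) ∨ x = 1 then 1 else 0
  | 1, x, a => if x = 1 ∧ a = 0 ∨ x = 2 ∧ a = 2 then 1 else 0
  | _ + 2, _, _ => 0

def pfd : ℕ → Fin 6 → Fin 3
  | 1, x => if x = 1 then 0 else 2
  | _, _ => 1

noncomputable def rsd : ℕ → Fin 6 → ℝ
  | 0, x => if x = 0 then 1 else 0
  | 1, x => if x = 1 then 1 else 0
  | _ + 2, x => if x = 3 then 1 else 0

noncomputable def rfd : ℕ → Fin 6 → ℝ
  | 0, x => if x = 0 then 1 else 0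
  | 1, x => if x = 2 then 1 else 0
  | _ + 2, x => if x = 4 then 1 else 0

noncomputable def ddd : ℕ → Fin 6 → Fin 3 → ℝ
  | 0, x, a => if x = 0 ∧ a = 0 then 1 else 0
  | 1, x, a => if x = 1 ∧ a = 0 ∨ x = 3 ∧ a = 2 then 1/2 else 0
  | _ + 2, _, _ => 0

noncomputable def wsd (h : ℕ) (x : Fin 6) (a : Fin 3) : ℝ :=
  (rsd h x * if a = (0 : Fin 3) then (1 : ℝ) else 0) / ddd h x a

lemma sup3 (g : Fin 3 → ℝ) : (univ.sup' univ_nonempty g) = g 0 ⊔ (g 1 ⊔ g 2) := by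
  have h : (univ : Finset (Fin 3)) = {0, 1, 2} := rfl
  simp [h, Finset.sup'_insert]


set_option maxHeartbeats 2000000 in
/-- Algorithm-specific counterexample (Section 4.2): there is a finite-horizon
MDP with `H = 2`, a realizable class `F = {Q*, f}`, a realizable weight class
`W = {w*, w_bad}` and a data distribution `d^D` covering `π*`, such that every
`g ∈ F` has zero population average Bellman error
`E_{d^D_h}[w_h·(g_h − T_h g_{h+1})]` for every `w ∈ W` and `h`, both `f` and
`Q*` attain value `1` at the initial state, yet the greedy policy `π_f` is not
`ε`-optimal for any `ε < 1`.  Values of policies are written via the state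
distributions `ρs` (of `π*`) and `ρf` (of `π_f`). -/
theorem stmt10 :
    ∃ (P : ℕ → Fin 6 → Fin 3 → Fin 6 → ℝ) (R : ℕ → Fin 6 → Fin 3 → ℝ)
      (x0 : Fin 6) (Qstar f : ℕ → Fin 6 → Fin 3 → ℝ)
      (πstar πf : ℕ → Fin 6 → Fin 3)
      (dD wstar wbad : ℕ → Fin 6 → Fin 3 → ℝ) (ρs ρf : ℕ → Fin 6 → ℝ),
      (∀ h x a x', 0 ≤ P h x a x') ∧
      (∀ h x a, ∑ x', P h x a x' = 1) ∧
      (∀ h x a, 0 ≤ R h x a ∧ R h x a ≤ 1) ∧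
      (∀ x a, Qstar 2 x a = 0 ∧ f 2 x a = 0) ∧
      -- Q* satisfies the Bellman optimality equations
      (∀ h, h < 2 → ∀ x a, Qstar h x a = R h x a + ∑ x', P h x a x' *
        (univ.sup' univ_nonempty fun a' => Qstar (h + 1) x' a')) ∧
      -- greedy policies
      (∀ h x a, Qstar h x a ≤ Qstar h x (πstar h x)) ∧
      (∀ h x a, f h x a ≤ f h x (πf h x)) ∧
      -- state distributions of π* and π_f
      (∀ x, ρs 0 x = if x = x0 then 1 else 0) ∧
      (∀ h x', ρs (h + 1) x' = ∑ x, ρs h x * P h x (πstar h x) x') ∧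
      (∀ x, ρf 0 x = if x = x0 then 1 else 0) ∧
      (∀ h x', ρf (h + 1) x' = ∑ x, ρf h x * P h x (πf h x) x') ∧
      -- data distribution covering π*, and w* the density ratio of π*
      (∀ h x a, 0 ≤ dD h x a) ∧
      (∀ h, h < 2 → ∀ x, 0 < ρs h x → 0 < dD h x (πstar h x)) ∧
      (∀ h x a, wstar h x a
        = (ρs h x * if a = πstar h x then (1 : ℝ) else 0) / dD h x a) ∧
      -- zero population average Bellman errors for both members of F under all of W
      (∀ w ∈ ({wstar, wbad} : Set (ℕ → Fin 6 → Fin 3 → ℝ)), ∀ h, h < 2 →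
        (∑ x, ∑ a, dD h x a * (w h x a * (Qstar h x a - R h x a
          - ∑ x', P h x a x' * Qstar (h + 1) x' (πstar (h + 1) x')))) = 0 ∧
        (∑ x, ∑ a, dD h x a * (w h x a * (f h x a - R h x a
          - ∑ x', P h x a x' * f (h + 1) x' (πf (h + 1) x')))) = 0) ∧
      -- both attain value 1 at the initial state
      f 0 x0 (πf 0 x0) = 1 ∧ Qstar 0 x0 (πstar 0 x0) = 1 ∧
      -- but π_f is not ε-optimal for any ε < 1
      (∀ ε : ℝ, ε < 1 →
        ∑ h ∈ range 2, ∑ x, ρf h x * R h x (πf h x)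
          < (∑ h ∈ range 2, ∑ x, ρs h x * R h x (πstar h x)) - ε) := by
  refine ⟨Pd, Rd, 0, Qd, fd, fun _ _ => 0, pfd, ddd, wsd, wsd, rsd, rfd,
    ?_, ?_, ?_, ?_, ?_, ?_, ?_, ?_, ?_, ?_, ?_, ?_, ?_, fun _ _ _ => rfl, ?_, ?_, ?_, ?_⟩
  · intro h x a x'; unfold Pd; split <;> norm_num
  · intro h x a; simp [Pd, Finset.sum_ite_eq']
  · intro h x a
    match h with
    | 0 => simp [Rd]
    | 1 => simp only [Rd]; split <;> norm_num
    | n + 2 => simp [Rd]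
  · intro x a; exact ⟨rfl, rfl⟩
  · intro h hh x a
    interval_cases h <;>
      simp only [sup3] <;> fin_cases x <;> fin_cases a <;>
      simp [Qd, Rd, Pd, nxt, Fin.sum_univ_six]
  · intro h x a
    match h with
    | 0 => fin_cases x <;> fin_cases a <;> simp [Qd]
    | 1 => fin_cases x <;> fin_cases a <;> simp [Qd]
    | n + 2 => simp [Qd]
  · intro h x a
    match h with
    | 0 => fin_cases x <;> fin_cases a <;> simp [fd, pfd]
    | 1 => fin_cases x <;> fin_cases a <;> simp [fd, pfd]
    | n + 2 => simp [fd]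
  · intro x; rfl
  · intro h x'
    match h with
    | 0 => fin_cases x' <;> simp [rsd, Pd, nxt, Fin.sum_univ_six]
    | 1 => fin_cases x' <;> simp [rsd, Pd, nxt, Fin.sum_univ_six]
    | n + 2 => fin_cases x' <;> simp [rsd, Pd, nxt, Fin.sum_univ_six]
  · intro x; rfl
  · intro h x'
    match h with
    | 0 => fin_cases x' <;> simp [rfd, Pd, nxt, pfd, Fin.sum_univ_six]
    | 1 => fin_cases x' <;> simp [rfd, Pd, nxt, pfd, Fin.sum_univ_six]
    | n + 2 => fin_cases x' <;> simp [rfd, Pd, nxt, pfd, Fin.sum_univ_six]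
  · intro h x a
    match h with
    | 0 => simp only [ddd]; split <;> norm_num
    | 1 => simp only [ddd]; split <;> norm_num
    | n + 2 => simp [ddd]
  · intro h hh x hx
    interval_cases h <;> fin_cases x <;> simp_all [rsd, ddd]
  · rintro w (rfl | rfl) h hh <;> interval_cases h <;>
      constructor <;>
      simp [ddd, wsd, rsd, Qd, fd, Rd, Pd, nxt, pfd,
        Fin.sum_univ_six, Fin.sum_univ_three]
  · simp [fd, pfd]
  · simp [Qd]
  · intro ε hε
    simp [Finset.sum_range_succ, Fin.sum_univ_six, rsd, rfd, Rd, pfd]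
    linarith
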